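/- Differential privacy as a conditional-PML constraint under product priors: For every ε ≥ 0, the mechanism p satisfies ε-differential privacy if and only if for every full-support product prior q on 𝒟^n, every y ∈ 𝒴, every i ∈ [n], and every x ∈ 𝒟^n: p(x)(y) · Σ_{d''∈𝒟} q(x[i↦d'']) ≤ e^ε · Σ_{d'∈𝒟} p(x[i↦d'])(y) · q(x[i↦d']). (The displayed inequality is the conditional pointwise-maximal-leakage constraint ℓ(D_i → y | x_{−i}) ≤ ε, written in multiplied-out form.) -/

import Mathlib

open Finset

/-- A probability mass function on a finite type. -/
def IsPMF {α : Type*} [Fintype α] (p : α → ℝ) : Prop :=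
  (∀ a, 0 ≤ p a) ∧ ∑ a, p a = 1

/-- A mechanism on databases: a conditional pmf from `𝒟^n` to `𝒴`. -/
def IsMechanism {𝒟 𝒴 : Type*} [Fintype 𝒴] {n : ℕ}
    (p : (Fin n → 𝒟) → 𝒴 → ℝ) : Prop :=
  ∀ x, (∀ y, 0 ≤ p x y) ∧ ∑ y, p x y = 1

/-- `ε`-differential privacy. -/
def DiffPrivate {𝒟 𝒴 : Type*} {n : ℕ} (p : (Fin n → 𝒟) → 𝒴 → ℝ) (ε : ℝ) : Prop :=
  ∀ (x : Fin n → 𝒟) (i : Fin n) (d' : 𝒟) (y : 𝒴),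
    p x y ≤ Real.exp ε * p (Function.update x i d') y

/-- `ε`-free-lunch privacy. -/
def FreeLunch {𝒟 𝒴 : Type*} {n : ℕ} (p : (Fin n → 𝒟) → 𝒴 → ℝ) (ε : ℝ) : Prop :=
  ∀ (x x' : Fin n → 𝒟) (y : 𝒴), p x y ≤ Real.exp ε * p x' y

/-- **Differential privacy as a conditional-PML constraint under product priors.** The
mechanism `p` satisfies `ε`-differential privacy iff for every full-support product prior
`q(x) = Π_j q_j(x_j)`, every outcome `y`, every coordinate `i`, and every database `x`,
`p(x)(y) · Σ_{d''} q(x[i↦d'']) ≤ e^ε · Σ_{d'} p(x[i↦d'])(y) · q(x[i↦d'])`. -/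
theorem dp_iff_conditional_pml_product_priors
    {𝒟 𝒴 : Type*} [Fintype 𝒟] [Fintype 𝒴] [Nonempty 𝒴]
    (hD : 2 ≤ Fintype.card 𝒟) {n : ℕ} (hn : 1 ≤ n)
    (p : (Fin n → 𝒟) → 𝒴 → ℝ) (hp : IsMechanism p)
    (ε : ℝ) (hε : 0 ≤ ε) :
    DiffPrivate p ε ↔
      ∀ qi : Fin n → 𝒟 → ℝ, (∀ i, IsPMF (qi i)) → (∀ i d, 0 < qi i d) →
        ∀ (y : 𝒴) (i : Fin n) (x : Fin n → 𝒟),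
          p x y * (∑ d'' : 𝒟, ∏ j, qi j (Function.update x i d'' j)) ≤
            Real.exp ε *
              ∑ d' : 𝒟, p (Function.update x i d') y *
                ∏ j, qi j (Function.update x i d' j) := by
  constructor
  · intro hdp qi hpmf hpos y i x
    rw [Finset.mul_sum, Finset.mul_sum]
    apply Finset.sum_le_sum
    intro d'' _
    have hPr : 0 ≤ ∏ j, qi j (Function.update x i d'' j) :=
      Finset.prod_nonneg fun j _ => (hpos j _).le
    calc p x y * ∏ j, qi j (Function.update x i d'' j)
        ≤ (Real.exp ε * p (Function.update x i d'') y) *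
            ∏ j, qi j (Function.update x i d'' j) :=
          mul_le_mul_of_nonneg_right (hdp x i d'' y) hPr
      _ = Real.exp ε * (p (Function.update x i d'') y *
            ∏ j, qi j (Function.update x i d'' j)) := by ring
  · intro h x i d' y
    classical
    have hnn : ∀ x', 0 ≤ p x' y := fun x' => (hp x').1 y
    have hub : ∀ x', p x' y ≤ 1 := by
      intro x'
      have := Finset.single_le_sum (f := p x') (fun z _ => (hp x').1 z) (mem_univ y)
      rwa [(hp x').2] at this
    set m := Fintype.card 𝒟 with hm
    have hm1 : (1:ℝ) ≤ (m:ℝ) - 1 := by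
      have : (2:ℝ) ≤ (m:ℝ) := by exact_mod_cast hD
      linarith
    have hm1pos : (0:ℝ) < (m:ℝ) - 1 := by linarith
    have hmpos : (0:ℝ) < (m:ℝ) := by linarith
    apply le_of_forall_pos_le_add
    intro η hη
    set δ : ℝ := min (η / Real.exp ε) (1/2) with hδdef
    have hδ0 : 0 < δ := lt_min (div_pos hη (Real.exp_pos ε)) (by norm_num)
    have hδh : δ ≤ 1/2 := min_le_right _ _
    set qi : Fin n → 𝒟 → ℝ := fun j d =>
      if j = i then (if d = d' then 1 - δ else δ / ((m:ℝ) - 1)) else (m:ℝ)⁻¹ with hqi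
    have hqpos : ∀ j d, 0 < qi j d := by
      intro j d
      simp only [hqi]
      split
      · split
        · linarith
        · exact div_pos hδ0 hm1pos
      · exact inv_pos.mpr hmpos
    have hcard : ((univ.erase d').card : ℝ) = (m:ℝ) - 1 := by
      rw [Finset.card_erase_of_mem (mem_univ d'), Finset.card_univ]
      have h1 : 1 ≤ m := by omega
      rw [← hm]
      push_cast [Nat.cast_sub h1]
      ring
    have hsum_i : ∑ d, qi i d = 1 := by
      rw [← Finset.add_sum_erase univ _ (mem_univ d')]
      have h1 : qi i d' = 1 - δ := by simp [hqi]
      have h2 : ∑ d ∈ univ.erase d', qi i d = δ := by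
        have heq : ∀ d ∈ univ.erase d', qi i d = δ / ((m:ℝ) - 1) := fun d hd => by
          simp [hqi, Finset.ne_of_mem_erase hd]
        rw [Finset.sum_congr rfl heq, Finset.sum_const, nsmul_eq_mul, hcard]
        field_simp
      rw [h1, h2]; ring
    have hpmf : ∀ j, IsPMF (qi j) := by
      intro j
      constructor
      · exact fun d => (hqpos j d).le
      · by_cases hji : j = i
        · subst hji; exact hsum_i
        · simp only [hqi, if_neg hji]
          rw [Finset.sum_const, Finset.card_univ, ← hm, nsmul_eq_mul]
          field_simp
    have key := h qi hpmf hqpos y i x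
    set C := ∏ j ∈ univ.erase i, qi j (x j) with hC
    have hCpos : 0 < C := Finset.prod_pos fun j _ => hqpos j _
    have hprod : ∀ d'', ∏ j, qi j (Function.update x i d'' j) = qi i d'' * C := by
      intro d''
      rw [← Finset.mul_prod_erase univ _ (mem_univ i)]
      congr 1
      · rw [Function.update_self]
      · exact Finset.prod_congr rfl fun j hj => by
          rw [Function.update_of_ne (Finset.ne_of_mem_erase hj)]
    simp only [hprod] at key
    have hL : ∑ d'' : 𝒟, qi i d'' * C = C := by
      rw [← Finset.sum_mul, hsum_i, one_mul]
    rw [hL] at key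
    have hR : ∑ d'' : 𝒟, p (Function.update x i d'') y * (qi i d'' * C)
        = (∑ d'' : 𝒟, p (Function.update x i d'') y * qi i d'') * C := by
      rw [Finset.sum_mul]; exact Finset.sum_congr rfl fun d'' _ => by ring
    rw [hR, ← mul_assoc] at key
    have key2 : p x y ≤ Real.exp ε * ∑ d'' : 𝒟, p (Function.update x i d'') y * qi i d'' := by
      have := (mul_le_mul_iff_of_pos_right hCpos).mp key
      linarith [this]
    have hS : ∑ d'' : 𝒟, p (Function.update x i d'') y * qi i d''
        ≤ p (Function.update x i d') y + δ := by
      rw [← Finset.add_sum_erase univ _ (mem_univ d')]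
      have h1 : p (Function.update x i d') y * qi i d' ≤ p (Function.update x i d') y := by
        have : qi i d' = 1 - δ := by simp [hqi]
        rw [this]
        nlinarith [hnn (Function.update x i d'), hδ0.le]
      have h2 : ∑ d'' ∈ univ.erase d', p (Function.update x i d'') y * qi i d'' ≤ δ := by
        calc ∑ d'' ∈ univ.erase d', p (Function.update x i d'') y * qi i d''
            ≤ ∑ d'' ∈ univ.erase d', δ / ((m:ℝ) - 1) := by
              apply Finset.sum_le_sum
              intro d'' hd
              have hq : qi i d'' = δ / ((m:ℝ) - 1) := by
                simp [hqi, Finset.ne_of_mem_erase hd]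
              rw [hq]
              have := hub (Function.update x i d'')
              have h0 := hnn (Function.update x i d'')
              have hdp : 0 < δ / ((m:ℝ) - 1) := div_pos hδ0 hm1pos
              nlinarith
          _ = δ := by
              rw [Finset.sum_const, nsmul_eq_mul, hcard]
              field_simp
      linarith
    have hδη : Real.exp ε * δ ≤ η := by
      have : δ ≤ η / Real.exp ε := min_le_left _ _
      calc Real.exp ε * δ ≤ Real.exp ε * (η / Real.exp ε) :=
            mul_le_mul_of_nonneg_left this (Real.exp_pos ε).le
        _ = η := by field_simp
    calc p x y ≤ Real.exp ε * ∑ d'' : 𝒟, p (Function.update x i d'') y * qi i d'' := key2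
      _ ≤ Real.exp ε * (p (Function.update x i d') y + δ) :=
          mul_le_mul_of_nonneg_left hS (Real.exp_pos ε).le
      _ = Real.exp ε * p (Function.update x i d') y + Real.exp ε * δ := by ring
      _ ≤ Real.exp ε * p (Function.update x i d') y + η := by linarith
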